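/- Let σ : ℝ → ℝ be the logistic function σ(x) = 1/(1 + e^{−x}). For all x, x⁰ ∈ ℝ: σ(x⁰) + σ(x⁰)(1 − σ(x⁰))(x − x⁰) − (√3/36)(x − x⁰)² ≤ σ(x) ≤ σ(x⁰) + σ(x⁰)(1 − σ(x⁰))(x − x⁰) + (√3/36)(x − x⁰)². -/

import Mathlib

open Real Set

private lemma logistic_hasDerivAt (σ : ℝ → ℝ)
    (hσ : ∀ x, σ x = 1 / (1 + Real.exp (-x))) (t : ℝ) :
    HasDerivAt σ (σ t * (1 - σ t)) t := by
  have hfun : σ = fun s => (1 + Real.exp (-s))⁻¹ := by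
    funext s; rw [hσ, one_div]
  have hpos : ∀ s : ℝ, (0:ℝ) < 1 + Real.exp (-s) := fun s => by positivity
  have h1 : HasDerivAt (fun s : ℝ => 1 + Real.exp (-s)) (Real.exp (-t) * (-1)) t := by
    exact ((hasDerivAt_id t).neg.exp).const_add 1
  have h2 := h1.inv (ne_of_gt (hpos t))
  rw [hfun]
  refine h2.congr_deriv ?_
  have hne := ne_of_gt (hpos t)
  field_simp
  ring

private lemma logistic_hasDerivAt2 (σ : ℝ → ℝ)
    (hσ : ∀ x, σ x = 1 / (1 + Real.exp (-x))) (t : ℝ) :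
    HasDerivAt (fun s => σ s * (1 - σ s)) (σ t * (1 - σ t) * (1 - 2 * σ t)) t := by
  have h1 := logistic_hasDerivAt σ hσ t
  have := h1.mul ((hasDerivAt_const t (1:ℝ)).sub h1)
  refine this.congr_deriv ?_
  simp only [Pi.sub_apply]; ring

private lemma logistic_mem_Ioo (σ : ℝ → ℝ)
    (hσ : ∀ x, σ x = 1 / (1 + Real.exp (-x))) (t : ℝ) : 0 < σ t ∧ σ t < 1 := by
  have he : (0:ℝ) < Real.exp (-t) := Real.exp_pos _
  rw [hσ]
  constructor
  · positivity
  · rw [div_lt_one (by positivity)]; linarith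

private lemma logistic_dd_bound (σ : ℝ → ℝ)
    (hσ : ∀ x, σ x = 1 / (1 + Real.exp (-x))) (t : ℝ) :
    |σ t * (1 - σ t) * (1 - 2 * σ t)| ≤ Real.sqrt 3 / 18 := by
  obtain ⟨h0, h1⟩ := logistic_mem_Ioo σ hσ t
  set s := σ t
  have hs3 : Real.sqrt 3 ^ 2 = 3 := Real.sq_sqrt (by norm_num)
  have hs3pos : 0 < Real.sqrt 3 := Real.sqrt_pos.mpr (by norm_num)
  have key : (s * (1 - s) * (1 - 2 * s)) ^ 2 ≤ 1 / 108 := by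
    nlinarith [mul_nonneg (sq_nonneg ((1 - 2*s)^2 - 1/3))
      (show (0:ℝ) ≤ 4/3 - (1 - 2*s)^2 by nlinarith)]
  rw [abs_le]
  constructor <;>
    nlinarith [key, sq_nonneg (s * (1 - s) * (1 - 2 * s) - Real.sqrt 3 / 18),
      sq_nonneg (s * (1 - s) * (1 - 2 * s) + Real.sqrt 3 / 18)]

/-- If `g` is convex on `ℝ` with derivative `0` at `x0`, then `x0` is a global min. -/
private lemma convex_min {g : ℝ → ℝ} {x0 : ℝ} (hg : ConvexOn ℝ Set.univ g)
    (h0 : HasDerivAt g 0 x0) (x : ℝ) : g x0 ≤ g x := by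
  rcases lt_trichotomy x x0 with h | h | h
  · have := hg.slope_le_of_hasDerivAt (mem_univ x) (mem_univ x0) h h0
    rw [slope_def_field] at this
    have hd : 0 < x0 - x := by linarith
    have h2 := (div_le_iff₀ hd).1 this
    linarith
  · rw [h]
  · have := hg.le_slope_of_hasDerivAt (mem_univ x0) (mem_univ x) h h0
    rw [slope_def_field] at this
    have hd : 0 < x - x0 := by linarith
    have h2 := (le_div_iff₀ hd).1 this
    linarith

/-- Concave envelope for the logistic function (Appendix A.4): quadratic over- and
under-estimators of `σ(x) = 1/(1 + e^{−x})`, valid for all `x`, tight at `x⁰`. -/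
theorem logistic_concave_envelope (σ : ℝ → ℝ)
    (hσ : ∀ x, σ x = 1 / (1 + Real.exp (-x))) (x x0 : ℝ) :
    σ x0 + σ x0 * (1 - σ x0) * (x - x0) - (Real.sqrt 3 / 36) * (x - x0) ^ 2 ≤ σ x ∧
    σ x ≤ σ x0 + σ x0 * (1 - σ x0) * (x - x0) + (Real.sqrt 3 / 36) * (x - x0) ^ 2 := by
  set c : ℝ := Real.sqrt 3 / 36 with hc
  set L : ℝ := σ x0 * (1 - σ x0) with hL
  have hd1 := logistic_hasDerivAt σ hσ
  have hd2 := logistic_hasDerivAt2 σ hσ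
  -- upper estimator: g t = σ x0 + L (t - x0) + c (t-x0)^2 - σ t is convex, min 0 at x0
  have hgconv : ConvexOn ℝ Set.univ
      (fun t => σ x0 + L * (t - x0) + c * (t - x0) ^ 2 - σ t) := by
    apply convexOn_of_hasDerivWithinAt2_nonneg (f' := fun t => L + c * (2 * (t - x0)) - σ t * (1 - σ t))
      (f'' := fun t => 2 * c - σ t * (1 - σ t) * (1 - 2 * σ t)) convex_univ
    · have hcσ : Continuous σ := continuous_iff_continuousAt.mpr fun t => (hd1 t).continuousAt
      fun_prop
    · intro t _
      rw [interior_univ]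
      refine HasDerivAt.hasDerivWithinAt ?_
      have h1 : HasDerivAt (fun t : ℝ => σ x0 + L * (t - x0) + c * (t - x0) ^ 2)
          (L + c * (2 * (t - x0))) t := by
        have := ((((hasDerivAt_id t).sub_const x0).const_mul L).const_add (σ x0)).add
          ((((hasDerivAt_id t).sub_const x0).pow 2).const_mul c)
        refine this.congr_deriv ?_
        simp <;> ring
      exact h1.sub (hd1 t)
    · intro t _
      rw [interior_univ]
      refine HasDerivAt.hasDerivWithinAt ?_
      have h1 : HasDerivAt (fun t : ℝ => L + c * (2 * (t - x0)))
          (2 * c) t := by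
        have := (((hasDerivAt_id t).sub_const x0).const_mul 2).const_mul c |>.const_add L
        refine this.congr_deriv ?_
        simp <;> ring
      exact h1.sub (hd2 t)
    · intro t _
      have := abs_le.1 (logistic_dd_bound σ hσ t)
      have h3 : Real.sqrt 3 / 18 = 2 * c := by rw [hc]; ring
      linarith [this.2, h3 ▸ this.2]
  have hgderiv : HasDerivAt (fun t => σ x0 + L * (t - x0) + c * (t - x0) ^ 2 - σ t) 0 x0 := by
    have h1 : HasDerivAt (fun t : ℝ => σ x0 + L * (t - x0) + c * (t - x0) ^ 2)
        (L + c * (2 * (x0 - x0))) x0 := by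
      have := ((((hasDerivAt_id x0).sub_const x0).const_mul L).const_add (σ x0)).add
        ((((hasDerivAt_id x0).sub_const x0).pow 2).const_mul c)
      refine this.congr_deriv ?_
      simp <;> ring
    have := h1.sub (hd1 x0)
    refine this.congr_deriv ?_
    rw [hL]; ring
  have hupper := convex_min hgconv hgderiv x
  simp only [sub_self, mul_zero, ne_eq, OfNat.ofNat_ne_zero, not_false_eq_true, zero_pow,
    add_zero, sub_self] at hupper
  -- lower estimator: h t = σ t - σ x0 - L (t - x0) + c (t-x0)^2 is convex, min 0 at x0
  have hhconv : ConvexOn ℝ Set.univ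
      (fun t => σ t - (σ x0 + L * (t - x0)) + c * (t - x0) ^ 2) := by
    apply convexOn_of_hasDerivWithinAt2_nonneg
      (f' := fun t => σ t * (1 - σ t) - L + c * (2 * (t - x0)))
      (f'' := fun t => σ t * (1 - σ t) * (1 - 2 * σ t) + 2 * c) convex_univ
    · have hcσ : Continuous σ := continuous_iff_continuousAt.mpr fun t => (hd1 t).continuousAt
      fun_prop
    · intro t _
      rw [interior_univ]
      refine HasDerivAt.hasDerivWithinAt ?_
      have h1 : HasDerivAt (fun t : ℝ => σ x0 + L * (t - x0))
          L t := by
        have := (((hasDerivAt_id t).sub_const x0).const_mul L).const_add (σ x0)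
        refine this.congr_deriv ?_
        simp
      have := ((hd1 t).sub h1).add ((((hasDerivAt_id t).sub_const x0).pow 2).const_mul c)
      refine this.congr_deriv ?_
      simp <;> ring
    · intro t _
      rw [interior_univ]
      refine HasDerivAt.hasDerivWithinAt ?_
      have h1 : HasDerivAt (fun t : ℝ => c * (2 * (t - x0))) (2 * c) t := by
        have := (((hasDerivAt_id t).sub_const x0).const_mul 2).const_mul c
        refine this.congr_deriv ?_
        simp <;> ring
      have := ((hd2 t).sub_const L).add h1
      exact this
    · intro t _
      have := abs_le.1 (logistic_dd_bound σ hσ t)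
      have h3 : Real.sqrt 3 / 18 = 2 * c := by rw [hc]; ring
      linarith [this.1, h3 ▸ this.1]
  have hhderiv : HasDerivAt (fun t => σ t - (σ x0 + L * (t - x0)) + c * (t - x0) ^ 2) 0 x0 := by
    have h1 : HasDerivAt (fun t : ℝ => σ x0 + L * (t - x0)) L x0 := by
      have := (((hasDerivAt_id x0).sub_const x0).const_mul L).const_add (σ x0)
      refine this.congr_deriv ?_
      simp
    have := ((hd1 x0).sub h1).add ((((hasDerivAt_id x0).sub_const x0).pow 2).const_mul c)
    refine this.congr_deriv ?_
    rw [hL]; simp <;> ring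
  have hlower := convex_min hhconv hhderiv x
  simp only [sub_self, mul_zero, ne_eq, OfNat.ofNat_ne_zero, not_false_eq_true, zero_pow,
    add_zero, sub_self] at hlower
  constructor <;> [skip; skip] <;> nlinarith [hupper, hlower]
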